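/- (Lemma 2.5(i)) Under the setup of Lemma 2.5 (z₁ a type-2 approximation with precision ε of the minimizer of z ↦ g(z) + (1/(2τ))‖z − (z₀ − D⁻¹u)‖²_D, and z₂ a type-1 approximation with precision ε of the minimizer of z ↦ g(z) + (1/(2τ))‖z − (z₀ − D⁻¹v)‖²_D), one has 0 ≤ ‖z₁ − z₂‖_D ≤ (1/2)·(√(2τε) + ‖u − v‖_{D⁻¹} + √(‖u − v‖²_{D⁻¹} + 10τε + 2√(2τε)·‖u − v‖_{D⁻¹})). -/

import Mathlib

open Matrix

/-- squared M-norm: ⟨x, M x⟩ -/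
noncomputable def sqnorm {d : ℕ} (M : Matrix (Fin d) (Fin d) ℝ) (x : Fin d → ℝ) : ℝ :=
  x ⬝ᵥ M.mulVec x

/-- M-norm: √⟨x, M x⟩ -/
noncomputable def mnorm {d : ℕ} (M : Matrix (Fin d) (Fin d) ℝ) (x : Fin d → ℝ) : ℝ :=
  Real.sqrt (x ⬝ᵥ M.mulVec x)

section aux
variable {d : ℕ}

lemma bsym {D : Matrix (Fin d) (Fin d) ℝ} (hD : D.PosDef) (x y : Fin d → ℝ) :
    x ⬝ᵥ D.mulVec y = y ⬝ᵥ D.mulVec x := by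
  have ht : Dᵀ = D := by
    have := hD.isHermitian.eq
    rw [Matrix.conjTranspose_eq_transpose_of_trivial] at this
    exact this
  rw [Matrix.dotProduct_mulVec, ← ht, Matrix.vecMul_transpose, dotProduct_comm, ht]

lemma bnonneg {D : Matrix (Fin d) (Fin d) ℝ} (hD : D.PosDef) (s : Fin d → ℝ) :
    0 ≤ s ⬝ᵥ D.mulVec s := by
  have := hD.posSemidef.dotProduct_mulVec_nonneg s
  simpa using this

lemma dinv_cancel {D : Matrix (Fin d) (Fin d) ℝ} (hD : D.PosDef) (x : Fin d → ℝ) :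
    D.mulVec (D⁻¹.mulVec x) = x := by
  rw [Matrix.mulVec_mulVec, Matrix.mul_nonsing_inv _ (isUnit_iff_ne_zero.mpr hD.det_pos.ne'),
    Matrix.one_mulVec]

lemma cs {D : Matrix (Fin d) (Fin d) ℝ} (hD : D.PosDef) (y x : Fin d → ℝ) :
    y ⬝ᵥ x ≤ mnorm D y * mnorm D⁻¹ x := by
  have hDi : D⁻¹.PosDef := hD.inv
  have hA0 : 0 ≤ y ⬝ᵥ D.mulVec y := bnonneg hD y
  have hB0 : 0 ≤ x ⬝ᵥ D⁻¹.mulVec x := bnonneg hDi x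
  have key : (y ⬝ᵥ x)^2 ≤ (y ⬝ᵥ D.mulVec y) * (x ⬝ᵥ D⁻¹.mulVec x) := by
    rcases eq_or_lt_of_le hB0 with hB1 | hB1
    · have hx : x = 0 := by
        by_contra hx
        exact absurd (hDi.dotProduct_mulVec_pos hx) (by simp [← hB1])
      simp [hx]
    · have hq := bnonneg hD (y - ((y ⬝ᵥ x)/(x ⬝ᵥ D⁻¹.mulVec x)) • D⁻¹.mulVec x)
      have e1 : y ⬝ᵥ D.mulVec (D⁻¹.mulVec x) = y ⬝ᵥ x := by rw [dinv_cancel hD]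
      have e2 : (D⁻¹.mulVec x) ⬝ᵥ D.mulVec y = y ⬝ᵥ x := by
        rw [bsym hD, dinv_cancel hD]
      have e3 : (D⁻¹.mulVec x) ⬝ᵥ D.mulVec (D⁻¹.mulVec x) = x ⬝ᵥ D⁻¹.mulVec x := by
        rw [dinv_cancel hD, dotProduct_comm]
      simp only [Matrix.mulVec_sub, Matrix.mulVec_smul, sub_dotProduct, dotProduct_sub,
        smul_dotProduct, dotProduct_smul, smul_eq_mul, e1, e2, e3] at hq
      have hBne : (x ⬝ᵥ D⁻¹.mulVec x) ≠ 0 := hB1.ne'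
      have hl : (y ⬝ᵥ x)/(x ⬝ᵥ D⁻¹.mulVec x) * (x ⬝ᵥ D⁻¹.mulVec x) = y ⬝ᵥ x :=
        div_mul_cancel₀ _ hBne
      nlinarith [hq, hl, hB1, mul_nonneg hq hB0]
  calc y ⬝ᵥ x ≤ |y ⬝ᵥ x| := le_abs_self _
    _ = Real.sqrt ((y ⬝ᵥ x)^2) := (Real.sqrt_sq_eq_abs _).symm
    _ ≤ Real.sqrt _ := Real.sqrt_le_sqrt key
    _ = mnorm D y * mnorm D⁻¹ x := by rw [Real.sqrt_mul hA0]; rfl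

lemma expand {D : Matrix (Fin d) (Fin d) ℝ} (hD : D.PosDef) (y s : Fin d → ℝ) (t : ℝ) :
    sqnorm D (y + t • s) = sqnorm D y + 2*t*(s ⬝ᵥ D.mulVec y) + t^2 * sqnorm D s := by
  simp only [sqnorm, Matrix.mulVec_add, Matrix.mulVec_smul, dotProduct_add, add_dotProduct,
    dotProduct_smul, smul_dotProduct, smul_eq_mul, bsym hD y s]
  ring

lemma mnorm_neg {d : ℕ} (M : Matrix (Fin d) (Fin d) ℝ) (x : Fin d → ℝ) :
    mnorm M (-x) = mnorm M x := by
  simp [mnorm, Matrix.mulVec_neg, dotProduct_neg, neg_dotProduct]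

end aux

set_option maxHeartbeats 1600000 in
/-- Lemma 2.5(i): bound on the D-distance between the two inexact proximal points. -/
theorem dist_bound {d : ℕ}
    (D : Matrix (Fin d) (Fin d) ℝ) (hD : D.PosDef)
    (τ : ℝ) (hτ : 0 < τ) (ε : ℝ) (hε : 0 < ε)
    (g : (Fin d → ℝ) → ℝ) (hconv : ConvexOn ℝ Set.univ g)
    (z₀ u v z₁ z₂ : Fin d → ℝ)
    (h1 : ∀ x, g x ≥ g z₁ +
        ((1 / τ) • D.mulVec (z₀ - D⁻¹.mulVec u - z₁)) ⬝ᵥ (x - z₁) - ε)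
    (h2 : ∀ x, g x + (1 / (2 * τ)) * sqnorm D (x - (z₀ - D⁻¹.mulVec v))
        ≥ g z₂ + (1 / (2 * τ)) * sqnorm D (z₂ - (z₀ - D⁻¹.mulVec v)) - ε) :
    0 ≤ mnorm D (z₁ - z₂) ∧
      mnorm D (z₁ - z₂) ≤ (1 / 2) * (Real.sqrt (2 * τ * ε) + mnorm D⁻¹ (u - v) +
        Real.sqrt ((mnorm D⁻¹ (u - v)) ^ 2 + 10 * τ * ε +
          2 * Real.sqrt (2 * τ * ε) * mnorm D⁻¹ (u - v))) := by
  set S := mnorm D (z₁ - z₂) with hSdef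
  set a := Real.sqrt (2 * τ * ε) with hadef
  set c := mnorm D⁻¹ (u - v) with hcdef
  have hS0 : 0 ≤ S := Real.sqrt_nonneg _
  have hc0 : 0 ≤ c := Real.sqrt_nonneg _
  have ha0 : 0 < a := Real.sqrt_pos.mpr (by positivity)
  have ha2 : a^2 = 2*τ*ε := Real.sq_sqrt (by positivity)
  have hSsq : S^2 = sqnorm D (z₁ - z₂) := Real.sq_sqrt (bnonneg hD _)
  refine ⟨hS0, ?_⟩
  -- rewrite the inner sqrt argument
  have harg : c^2 + 10*τ*ε + 2*a*c = (a+c)^2 + 8*τ*ε := by linear_combination -ha2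
  rw [show (c^2 + 10 * τ * ε + 2 * a * c : ℝ) = (a+c)^2 + 8*τ*ε from harg]
  set r := Real.sqrt ((a+c)^2 + 8*τ*ε) with hrdef
  have hr0 : 0 ≤ r := Real.sqrt_nonneg _
  have hr2 : r^2 = (a+c)^2 + 8*τ*ε := Real.sq_sqrt (by positivity)
  have hrge : a + c ≤ r := by
    rw [hrdef]
    calc a + c = Real.sqrt ((a+c)^2) := (Real.sqrt_sq (by positivity)).symm
      _ ≤ _ := Real.sqrt_le_sqrt (by nlinarith [hτ, hε])
  clear_value S a c r
  rcases le_or_gt S a with hcase | hcase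
  · linarith
  -- main case : S > a > 0
  have hSpos : 0 < S := lt_trans ha0 hcase
  set t := a / S with htdef
  have ht0 : 0 < t := div_pos ha0 hSpos
  have ht1 : t ≤ 1 := (div_le_one hSpos).mpr hcase.le
  have htS : t * S = a := div_mul_cancel₀ a hSpos.ne'
  clear_value t
  -- convexity at the intermediate point
  have hcv := hconv.2 (Set.mem_univ z₁) (Set.mem_univ z₂) ht0.le
    (by linarith : (0:ℝ) ≤ 1 - t) (by ring)
  have hxt : z₂ + t • (z₁ - z₂) = t • z₁ + (1-t) • z₂ := by module
  rw [← hxt] at hcv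
  -- instantiate h2 at the intermediate point
  have hk := h2 (z₂ + t • (z₁ - z₂))
  have harg2 : (z₂ + t • (z₁ - z₂)) - (z₀ - D⁻¹.mulVec v)
      = (z₂ - (z₀ - D⁻¹.mulVec v)) + t • (z₁ - z₂) := by module
  rw [harg2, expand hD] at hk
  -- instantiate h1 at z₂
  have hs1 := h1 z₂
  set Q := (z₁ - z₂) ⬝ᵥ D.mulVec (z₀ - D⁻¹.mulVec u - z₁) with hQdef
  have hdot : ((1 / τ) • D.mulVec (z₀ - D⁻¹.mulVec u - z₁)) ⬝ᵥ (z₂ - z₁) = -(1/τ) * Q := by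
    rw [hQdef, dotProduct_comm (z₁ - z₂), smul_dotProduct,
      show z₂ - z₁ = -(z₁ - z₂) from (neg_sub _ _).symm, dotProduct_neg, smul_eq_mul]
    ring
  rw [hdot] at hs1
  set P := (z₁ - z₂) ⬝ᵥ D.mulVec (z₂ - (z₀ - D⁻¹.mulVec v)) with hPdef
  -- key algebraic identity
  have hQP : Q + P = (z₁ - z₂) ⬝ᵥ (v - u) - sqnorm D (z₁ - z₂) := by
    rw [hQdef, hPdef, ← dotProduct_add, ← Matrix.mulVec_add]
    have hsplit : (z₀ - D⁻¹.mulVec u - z₁) + (z₂ - (z₀ - D⁻¹.mulVec v))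
        = D⁻¹.mulVec (v - u) - (z₁ - z₂) := by
      rw [Matrix.mulVec_sub]; module
    rw [hsplit, Matrix.mulVec_sub, dotProduct_sub, dinv_cancel hD, sqnorm]
  -- Cauchy-Schwarz
  have hCS : (z₁ - z₂) ⬝ᵥ (v - u) ≤ S * c := by
    have h := cs hD (z₁ - z₂) (v - u)
    have hm : mnorm D⁻¹ (v - u) = c := by
      rw [show v - u = -(u - v) from (neg_sub _ _).symm, mnorm_neg]
      exact hcdef.symm
    rw [hm, ← hSdef] at h
    exact h
  -- combine hk, hcv, hs1
  have hE : -ε ≤ t * ((1/τ) * Q + ε) + (1/(2*τ)) * (2*t*P + t^2 * sqnorm D (z₁ - z₂)) := by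
    have hmul : t * (g z₁ - g z₂) ≤ t * ((1/τ) * Q + ε) := by
      apply mul_le_mul_of_nonneg_left _ ht0.le
      linarith [hs1]
    have hconvk : t * (g z₁ - g z₂) + (1/(2*τ)) * (2*t*P + t^2 * sqnorm D (z₁ - z₂)) ≥ -ε := by
      simp only [smul_eq_mul] at hcv
      linarith [hcv, hk]
    linarith [hmul, hconvk]
  -- clear denominators
  have hτne : (τ:ℝ) ≠ 0 := hτ.ne'
  have hid : 2*τ*(t * ((1/τ) * Q + ε) + (1/(2*τ)) * (2*t*P + t^2 * sqnorm D (z₁ - z₂)))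
      = 2*t*Q + 2*τ*t*ε + 2*t*P + t^2 * sqnorm D (z₁ - z₂) := by
    field_simp
    ring
  have hE2 : -(2*τ*ε) ≤ 2*t*Q + 2*t*P + 2*τ*t*ε + t^2 * S^2 := by
    have h := mul_le_mul_of_nonneg_left hE (by positivity : (0:ℝ) ≤ 2*τ)
    rw [hid] at h
    rw [hSsq]
    linarith
  have hsub : 2*t*(Q+P) ≤ 2*t*(S*c - S^2) := by
    apply mul_le_mul_of_nonneg_left _ (by linarith : (0:ℝ) ≤ 2*t)
    rw [hQP, ← hSsq]
    linarith [hCS]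
  have hE3 : -(2*τ*ε) ≤ 2*t*(S*c) - 2*t*S^2 + 2*τ*t*ε + t^2*S^2 := by linarith
  have e4 : t^2*S^2 = a^2 := by rw [← htS]; ring
  have e5 : t*a*S = a^2 := by rw [← htS]; ring
  have hquad : S^2 ≤ (a+c)*S + 2*τ*ε := by
    have h2t : (0:ℝ) < 2*t := by linarith
    have hgoal2 : 2*t*(S^2) ≤ 2*t*((a+c)*S + 2*τ*ε) := by
      nlinarith only [hE3, e4, e5, ha2, mul_nonneg ht0.le (mul_pos hτ hε).le]
    exact le_of_mul_le_mul_left hgoal2 h2t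
  nlinarith only [hquad, hr2, hr0, hrge, hS0, hc0, ha0.le]
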